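/- For every natural number k and every GLP formula φ, GLP proves ⟨α+1⟩φ → Q^k_α(φ), where Q^0_α(φ) = ⟨α⟩φ and Q^{k+1}_α(φ) = ⟨α⟩(φ ∧ Q^k_α(φ)). -/

import Mathlib

/-- Formulas of polymodal provability logic GLP with ordinal-indexed modalities. -/
inductive GLPFormula : Type 1 where
  | bot : GLPFormula
  | var : ℕ → GLPFormula
  | imp : GLPFormula → GLPFormula → GLPFormula
  | and : GLPFormula → GLPFormula → GLPFormula
  | box : Ordinal → GLPFormula → GLPFormula

namespace GLPFormula

def neg (A : GLPFormula) : GLPFormula := imp A bot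
def top : GLPFormula := neg bot
def dia (α : Ordinal) (A : GLPFormula) : GLPFormula := neg (box α (neg A))
def iff (A B : GLPFormula) : GLPFormula := and (imp A B) (imp B A)

/-- A formula is a propositional tautology if every boolean valuation commuting with
the propositional connectives (and arbitrary on boxes and variables) makes it true. -/
def IsTaut (A : GLPFormula) : Prop :=
  ∀ v : GLPFormula → Bool, v bot = false →
    (∀ B C, v (imp B C) = (!v B || v C)) →
    (∀ B C, v (and B C) = (v B && v C)) →
    v A = true

/-- Hilbert-style provability in GLP. -/
inductive Proof : GLPFormula → Prop where
  | taut {A} : IsTaut A → Proof A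
  | k {α A B} : Proof ((box α (A.imp B)).imp ((box α A).imp (box α B)))
  | lob {α A} : Proof ((box α ((box α A).imp A)).imp (box α A))
  | mono {α β A} : α ≤ β → Proof ((box α A).imp (box β A))
  | negIntro {α β A} : α < β → Proof ((dia α A).imp (box β (dia α A)))
  | mp {A B} : Proof (A.imp B) → Proof A → Proof B
  | nec {α A} : Proof A → Proof (box α A)

/-- Q^0_α(φ) = ⟨α⟩φ, Q^{k+1}_α(φ) = ⟨α⟩(φ ∧ Q^k_α(φ)). -/
def Q (α : Ordinal) (φ : GLPFormula) : ℕ → GLPFormula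
  | 0 => dia α φ
  | k + 1 => dia α (φ.and (Q α φ k))

end GLPFormula

open GLPFormula

namespace GLPAux

lemma taut_trans (A B C : GLPFormula) :
    Proof ((A.imp B).imp ((B.imp C).imp (A.imp C))) := by
  apply Proof.taut
  intro v hb hi _
  simp only [hi]
  cases v A <;> cases v B <;> cases v C <;> simp

lemma taut_S (A B C : GLPFormula) :
    Proof ((A.imp (B.imp C)).imp ((A.imp B).imp (A.imp C))) := by
  apply Proof.taut
  intro v hb hi _
  simp only [hi]
  cases v A <;> cases v B <;> cases v C <;> simp

lemma taut_id (A : GLPFormula) : Proof (A.imp A) := by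
  apply Proof.taut
  intro v hb hi _
  simp only [hi]
  cases v A <;> simp

lemma taut_contra (A B : GLPFormula) :
    Proof ((A.imp B).imp (B.neg.imp A.neg)) := by
  apply Proof.taut
  intro v hb hi _
  simp only [neg, hi, hb]
  cases v A <;> cases v B <;> simp

lemma taut_curry (A B : GLPFormula) :
    Proof ((A.and B).neg.imp (B.imp A.neg)) := by
  apply Proof.taut
  intro v hb hi ha
  simp only [neg, hi, ha, hb]
  cases v A <;> cases v B <;> simp

lemma taut_shuffle (X Y Z : GLPFormula) :
    Proof ((X.imp (Y.imp Z)).imp (Y.imp (Z.neg.imp X.neg))) := by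
  apply Proof.taut
  intro v hb hi _
  simp only [neg, hi, hb]
  cases v X <;> cases v Y <;> cases v Z <;> simp

lemma imp_trans {A B C : GLPFormula} (h1 : Proof (A.imp B)) (h2 : Proof (B.imp C)) :
    Proof (A.imp C) :=
  Proof.mp (Proof.mp (taut_trans A B C) h1) h2

lemma impS {A B C : GLPFormula} (h1 : Proof (A.imp (B.imp C))) (h2 : Proof (A.imp B)) :
    Proof (A.imp C) :=
  Proof.mp (Proof.mp (taut_S A B C) h1) h2

lemma contrapose {A B : GLPFormula} (h : Proof (A.imp B)) : Proof (B.neg.imp A.neg) :=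
  Proof.mp (taut_contra A B) h

lemma boxK {β : Ordinal} {A B : GLPFormula} (h : Proof (A.imp B)) :
    Proof ((box β A).imp (box β B)) :=
  Proof.mp Proof.k (Proof.nec h)

lemma diaMono {α β : Ordinal} (h : α ≤ β) (A : GLPFormula) :
    Proof ((dia β A).imp (dia α A)) :=
  contrapose (Proof.mono h)

/-- [β]B → (⟨β⟩A → ⟨β⟩(A ∧ B)) -/
lemma diaAnd (β : Ordinal) (A B : GLPFormula) :
    Proof ((box β B).imp ((dia β A).imp (dia β (A.and B)))) := by
  have s1 : Proof ((box β (A.and B).neg).imp (box β (B.imp A.neg))) :=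
    boxK (taut_curry A B)
  have s2 : Proof ((box β (B.imp A.neg)).imp ((box β B).imp (box β A.neg))) := Proof.k
  have s3 := imp_trans s1 s2
  exact Proof.mp (taut_shuffle _ _ _) s3

lemma negIntroQ (k : ℕ) (α : Ordinal) (φ : GLPFormula) :
    Proof ((Q α φ k).imp (box (α + 1) (Q α φ k))) := by
  have hlt : α < α + 1 := by
    rw [Ordinal.add_one_eq_succ]; exact Order.lt_succ α
  cases k with
  | zero => exact Proof.negIntro hlt
  | succ k => exact Proof.negIntro hlt

end GLPAux

open GLPAux

/-- For every k and every GLP formula φ, GLP ⊢ ⟨α+1⟩φ → Q^k_α(φ). -/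
theorem glp_diaSucc_imp_Q (k : ℕ) (α : Ordinal) (φ : GLPFormula) :
    Proof ((dia (α + 1) φ).imp (Q α φ k)) := by
  induction k with
  | zero => exact diaMono (le_of_lt (by rw [Ordinal.add_one_eq_succ]; exact Order.lt_succ α)) φ
  | succ k ih =>
    -- D → Q_k → [α+1]Q_k
    have h1 : Proof ((dia (α + 1) φ).imp (box (α + 1) (Q α φ k))) :=
      imp_trans ih (negIntroQ k α φ)
    have h2 : Proof ((dia (α + 1) φ).imp ((dia (α + 1) φ).imp (dia (α + 1) (φ.and (Q α φ k))))) :=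
      imp_trans h1 (diaAnd (α + 1) φ (Q α φ k))
    have h3 : Proof ((dia (α + 1) φ).imp (dia (α + 1) (φ.and (Q α φ k)))) :=
      impS h2 (taut_id _)
    exact imp_trans h3
      (diaMono (le_of_lt (by rw [Ordinal.add_one_eq_succ]; exact Order.lt_succ α)) _)
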